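/- arXiv:2601.09435 — 2 statements merged into one kernel-verified Lean document; each statement's English description precedes it below -/
import Mathlib

section
/- Let n ≥ 2 be an integer, p > 1, c2 > 0, and r ∈ (0,1). Let Σ' ⊂ ℝ^{n−1} be a nonempty bounded open convex set, and write d(x') := dist(x', Σ'). Then lim_{ε→0⁺} ε^{p−1} · ∫_{{x' ∈ ℝ^{n−1} : 0 < d(x') < r}} (ε + c2·d(x')²)^{1−p} dx' = 0. -/
open MeasureTheory Filter Set Metric

/-- The collar outside the flat region contributes a lower-order term:
`ε^{p-1} ∫_{0<d<r} (ε + c₂ d²)^{1-p} → 0` as `ε → 0⁺`. -/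
theorem collar_integral_lower_order
    {n : ℕ} (hn : 2 ≤ n) (p c2 r : ℝ) (hp : 1 < p) (hc2 : 0 < c2)
    (hr : r ∈ Ioo (0:ℝ) 1)
    (S : Set (EuclideanSpace ℝ (Fin (n-1))))
    (hne : S.Nonempty) (hb : Bornology.IsBounded S) (ho : IsOpen S)
    (hconv : Convex ℝ S) :
    Tendsto (fun ε : ℝ =>
      ε ^ (p - 1) *
        ∫ x' in {x' : EuclideanSpace ℝ (Fin (n-1)) |
            0 < infDist x' S ∧ infDist x' S < r},
          (ε + c2 * (infDist x' S) ^ 2) ^ (1 - p))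
      (nhdsWithin 0 (Ioi 0)) (nhds 0) := by
  set C : Set (EuclideanSpace ℝ (Fin (n-1))) :=
    {x' | 0 < infDist x' S ∧ infDist x' S < r} with hC
  have hCopen : IsOpen C := by
    have : C = (fun x => infDist x S) ⁻¹' (Ioo 0 r) := rfl
    rw [this]
    exact isOpen_Ioo.preimage (continuous_infDist_pt S)
  have hCmeas : MeasurableSet C := hCopen.measurableSet
  have hCbdd : Bornology.IsBounded C := by
    refine (hb.thickening (δ := r)).subset ?_
    intro x hx
    exact (Metric.mem_thickening_iff_infDist_lt hne).2 hx.2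
  have hCfin : volume C < ⊤ := hCbdd.measure_lt_top
  have key : Tendsto (fun ε : ℝ =>
      ∫ x in C, ε ^ (p - 1) * (ε + c2 * (infDist x S) ^ 2) ^ (1 - p))
      (nhdsWithin 0 (Ioi 0)) (nhds 0) := by
    rw [show nhds (0:ℝ) = nhds (∫ _x in C, (0 : ℝ)) by simp]
    apply tendsto_integral_filter_of_dominated_convergence (fun _ => (1 : ℝ))
    · filter_upwards [self_mem_nhdsWithin] with ε hε
      have hε' : (0 : ℝ) < ε := hε
      apply Continuous.aestronglyMeasurable
      refine continuous_const.mul (Continuous.rpow_const ?_ fun x => Or.inl ?_)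
      · exact continuous_const.add
          (continuous_const.mul ((continuous_infDist_pt S).pow 2))
      · have h1 : 0 ≤ infDist x S := infDist_nonneg
        positivity
    · filter_upwards [self_mem_nhdsWithin] with ε hε
      have hε' : (0 : ℝ) < ε := hε
      refine ae_of_all _ fun x => ?_
      have hd0 : 0 ≤ infDist x S := infDist_nonneg
      have hbase : ε ≤ ε + c2 * (infDist x S) ^ 2 := by nlinarith
      have h1 : (ε + c2 * (infDist x S) ^ 2) ^ (1 - p) ≤ ε ^ (1 - p) :=
        Real.rpow_le_rpow_of_nonpos hε' hbase (by linarith)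
      have h2 : 0 ≤ (ε + c2 * (infDist x S) ^ 2) ^ (1 - p) :=
        Real.rpow_nonneg (by nlinarith) _
      have h3 : 0 ≤ ε ^ (p - 1) := Real.rpow_nonneg hε'.le _
      calc ‖ε ^ (p - 1) * (ε + c2 * (infDist x S) ^ 2) ^ (1 - p)‖
          = ε ^ (p - 1) * (ε + c2 * (infDist x S) ^ 2) ^ (1 - p) := by
            rw [Real.norm_eq_abs, abs_of_nonneg (mul_nonneg h3 h2)]
        _ ≤ ε ^ (p - 1) * ε ^ (1 - p) := mul_le_mul_of_nonneg_left h1 h3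
        _ = 1 := by
            rw [← Real.rpow_add hε']
            norm_num
    · exact (integrableOn_const_iff).2 (Or.inr hCfin)
    · refine (ae_restrict_iff' hCmeas).2 (ae_of_all _ fun x hx => ?_)
      have hdx : 0 < infDist x S := hx.1
      have hc : 0 < c2 * (infDist x S) ^ 2 := by positivity
      have h1 : Tendsto (fun ε : ℝ => ε ^ (p - 1)) (nhdsWithin 0 (Ioi 0))
          (nhds 0) := by
        have hcont := (Real.continuousAt_rpow_const 0 (p - 1)
          (Or.inr (by linarith))).tendsto
        rw [Real.zero_rpow (by linarith : p - 1 ≠ 0)] at hcont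
        exact hcont.mono_left nhdsWithin_le_nhds
      have h2 : Tendsto (fun ε : ℝ => (ε + c2 * (infDist x S) ^ 2) ^ (1 - p))
          (nhdsWithin 0 (Ioi 0))
          (nhds ((c2 * (infDist x S) ^ 2) ^ (1 - p))) := by
        have hadd : Tendsto (fun ε : ℝ => ε + c2 * (infDist x S) ^ 2)
            (nhdsWithin 0 (Ioi 0)) (nhds (c2 * (infDist x S) ^ 2)) := by
          have := (continuous_id.add
            (continuous_const (y := c2 * (infDist x S) ^ 2))).tendsto 0
          simpa [Pi.add_def] using this.mono_left nhdsWithin_le_nhds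
        exact ((Real.continuousAt_rpow_const _ (1 - p)
          (Or.inl hc.ne')).tendsto).comp hadd
      simpa using h1.mul h2
  have heq : (fun ε : ℝ =>
      ε ^ (p - 1) * ∫ x in C, (ε + c2 * (infDist x S) ^ 2) ^ (1 - p)) =
      fun ε : ℝ =>
        ∫ x in C, ε ^ (p - 1) * (ε + c2 * (infDist x S) ^ 2) ^ (1 - p) := by
    funext ε
    exact (integral_const_mul _ _).symm
  exact heq ▸ key
end

section
/- Let n ≥ 3 be an integer, γ ∈ (0,1), p > (n+γ)/(1+γ), and r > 0. Let a : S^{n−2} → ℝ be a continuous function on the unit sphere S^{n−2} ⊂ ℝ^{n−1} with a(θ) ≥ a_min for all θ ∈ S^{n−2}, for some constant a_min > 0. Then lim_{ε→0⁺} ε^{(p−1)−(n−1)/(1+γ)} · ∫_{{|x'|<r}} (ε + a(x'/|x'|)·|x'|^{1+γ})^{1−p} dx' = ∫_{S^{n−2}} ∫_0^∞ s^{n−2}/(1+a(θ)·s^{1+γ})^{p−1} ds dσ(θ), where σ denotes the surface measure on S^{n−2}. -/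
open MeasureTheory Filter Set Metric Real

lemma aux_integrable (k : ℕ) {γ p α : ℝ} (hγ : 0 < γ) (hα : 0 < α)
    (hkp : (k:ℝ) + 1 < (1+γ)*(p-1)) :
    IntegrableOn (fun t : ℝ => t^k * (1 + α*t^(1+γ))^(1-p)) (Ioi (0:ℝ)) := by
  have h1γ : (0:ℝ) < 1 + γ := by linarith
  have hp1 : (0:ℝ) < p - 1 := by nlinarith [Nat.cast_nonneg (α := ℝ) k]
  have hmeas : Measurable (fun t : ℝ => t^k * (1 + α*t^(1+γ))^(1-p)) := by
    fun_prop
  have hnn : ∀ t : ℝ, 0 < t → 0 < 1 + α*t^(1+γ) := fun t ht => by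
    have := Real.rpow_nonneg ht.le (1+γ)
    nlinarith
  rw [← Ioc_union_Ioi_eq_Ioi (zero_le_one (α := ℝ)), integrableOn_union]
  constructor
  · refine Integrable.mono' (g := fun _ => (1:ℝ))
      (integrableOn_const (by simp) (by simp)) hmeas.aestronglyMeasurable ?_
    filter_upwards [ae_restrict_mem measurableSet_Ioc] with t ht
    have ht0 : 0 < t := ht.1
    have h2 : (1 + α*t^(1+γ))^(1-p) ≤ 1 :=
      Real.rpow_le_one_of_one_le_of_nonpos
        (by have := Real.rpow_nonneg ht0.le (1+γ); nlinarith) (by linarith)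
    have h1 : t^k ≤ 1 := pow_le_one₀ ht0.le ht.2
    have hnn2 : (0:ℝ) ≤ (1 + α*t^(1+γ))^(1-p) := Real.rpow_nonneg (hnn t ht0).le _
    rw [Real.norm_eq_abs, abs_of_nonneg (by positivity)]
    calc t^k * (1 + α*t^(1+γ))^(1-p) ≤ 1 * 1 := by
          apply mul_le_mul h1 h2 hnn2 zero_le_one
      _ = 1 := by ring
  · have hexp : (k:ℝ) + (1+γ)*(1-p) < -1 := by nlinarith
    refine Integrable.mono' (g := fun t => α^(1-p) * t ^ ((k:ℝ) + (1+γ)*(1-p)))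
      ((integrableOn_Ioi_rpow_of_lt hexp one_pos).const_mul _)
      hmeas.aestronglyMeasurable ?_
    filter_upwards [ae_restrict_mem measurableSet_Ioi] with t ht
    have ht0 : (0:ℝ) < t := lt_trans one_pos ht
    have htp : 0 < α*t^(1+γ) := by positivity
    have hle : (1 + α*t^(1+γ))^(1-p) ≤ (α*t^(1+γ))^(1-p) :=
      Real.rpow_le_rpow_of_nonpos htp (by linarith) (by linarith)
    rw [Real.norm_eq_abs, abs_of_nonneg (by positivity)]
    calc t^k * (1 + α*t^(1+γ))^(1-p) ≤ t^k * (α*t^(1+γ))^(1-p) := by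
          apply mul_le_mul_of_nonneg_left hle (by positivity)
      _ = α^(1-p) * t ^ ((k:ℝ) + (1+γ)*(1-p)) := by
          rw [Real.mul_rpow hα.le (Real.rpow_nonneg ht0.le _), ← Real.rpow_natCast t k,
            ← Real.rpow_mul ht0.le, Real.rpow_add ht0]
          ring


lemma tendR {γ r : ℝ} (hγ : 0 < γ) (hr : 0 < r) :
    Tendsto (fun ε : ℝ => r * ε ^ (-(1+γ)⁻¹)) (nhdsWithin 0 (Ioi 0)) atTop := by
  have hu : (0:ℝ) < (1+γ)⁻¹ := by positivity
  have h1 : Tendsto (fun ε : ℝ => (ε⁻¹) ^ ((1+γ)⁻¹)) (nhdsWithin 0 (Ioi 0)) atTop :=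
    (tendsto_rpow_atTop hu).comp tendsto_inv_nhdsGT_zero
  have h2 : Tendsto (fun ε : ℝ => ε ^ (-(1+γ)⁻¹)) (nhdsWithin 0 (Ioi 0)) atTop := by
    refine h1.congr' ?_
    filter_upwards [eventually_mem_nhdsWithin] with ε (hε : (0:ℝ) < ε)
    rw [Real.inv_rpow hε.le, ← Real.rpow_neg hε.le]
  exact h2.const_mul_atTop hr

lemma trunc_eq (k : ℕ) (X : ℝ → ℝ) (R : ℝ) :
    ∫ t in Ioi (0:ℝ), t ^ k * (if t < R then X t else 0)
      = ∫ t in Ioo (0:ℝ) R, t ^ k * X t := by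
  have h : (fun t : ℝ => t ^ k * (if t < R then X t else 0))
      = (Iio R).indicator (fun t => t ^ k * X t) := by
    funext t; by_cases h : t < R <;> simp [indicator, mem_Iio, h]
  rw [h, setIntegral_indicator measurableSet_Iio, Set.Ioi_inter_Iio]


open Classical in
lemma stepA {m : ℕ} (hm : 2 ≤ m) {r ε γ p : ℝ} (hr : 0 < r) (hε : 0 < ε)
    (hγ : 0 < γ) (hp1 : 1 < p)
    (a : sphere (0 : EuclideanSpace ℝ (Fin m)) 1 → ℝ)
    (ha_cont : Continuous a) (hapos : ∀ θ, 0 < a θ) :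
    (∫ x' in {x' : EuclideanSpace ℝ (Fin m) | ‖x'‖ < r},
      if h : x' ≠ 0 then
        (ε + a ⟨‖x'‖⁻¹ • x', mem_sphere_zero_iff_norm.mpr (norm_smul_inv_norm h)⟩ *
          ‖x'‖ ^ (1 + γ)) ^ (1 - p)
      else 0)
    = ∫ θ, (∫ s in Ioi (0:ℝ),
        s ^ (m-1) * (if s < r then (ε + a θ * s ^ (1 + γ)) ^ (1 - p) else 0))
      ∂((volume : Measure (EuclideanSpace ℝ (Fin m))).toSphere) := by
  set E := EuclideanSpace ℝ (Fin m)
  haveI : Nontrivial E := Module.nontrivial_of_finrank_pos (R := ℝ)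
    (by rw [finrank_euclideanSpace_fin]; omega)
  set μ : Measure E := volume with hμ
  have hdim : Module.finrank ℝ E = m := finrank_euclideanSpace_fin
  -- the full function
  set F : E → ℝ := fun x => if ‖x‖ < r then
      (if h : x ≠ 0 then
        (ε + a ⟨‖x‖⁻¹ • x, mem_sphere_zero_iff_norm.mpr (norm_smul_inv_norm h)⟩ *
          ‖x‖ ^ (1 + γ)) ^ (1 - p)
      else 0) else 0 with hF
  have h1 : (∫ x' in {x' : E | ‖x'‖ < r},
      if h : x' ≠ 0 then
        (ε + a ⟨‖x'‖⁻¹ • x', mem_sphere_zero_iff_norm.mpr (norm_smul_inv_norm h)⟩ *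
          ‖x'‖ ^ (1 + γ)) ^ (1 - p)
      else 0) = ∫ x, F x ∂μ := by
    rw [← integral_indicator (by
      simpa [ball, dist_zero_right] using measurableSet_ball (x := (0:E)) (ε := r))]
    exact integral_congr_ae (Eventually.of_forall fun x => by
      by_cases hx : ‖x‖ < r <;> simp [hF, indicator, hx])
  rw [h1]
  set W : sphere (0:E) 1 × Ioi (0:ℝ) → ℝ := fun q =>
    if q.2.1 < r then (ε + a q.1 * q.2.1 ^ (1 + γ)) ^ (1 - p) else 0 with hW
  have h2 : ∫ x, F x ∂μ
      = ∫ q, W q ∂(μ.toSphere.prod (Measure.volumeIoiPow (m - 1))) := by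
    have key := (μ.measurePreserving_homeomorphUnitSphereProd).integral_comp
      (Homeomorph.measurableEmbedding _) (fun q : sphere (0:E) 1 × Ioi (0:ℝ) => F (q.2.1 • q.1.1))
    rw [hdim] at key
    calc ∫ x, F x ∂μ = ∫ x in ({(0:E)}ᶜ : Set E), F x ∂μ := by
          rw [MeasureTheory.restrict_compl_singleton]
      _ = ∫ x : ({(0:E)}ᶜ : Set E), F x.1 ∂(μ.comap Subtype.val) :=
          (integral_subtype_comap (measurableSet_singleton (0:E)).compl F).symm
      _ = ∫ x : ({(0:E)}ᶜ : Set E),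
            (fun q : sphere (0:E) 1 × Ioi (0:ℝ) => F (q.2.1 • q.1.1))
              (homeomorphUnitSphereProd E x) ∂(μ.comap Subtype.val) := by
          refine integral_congr_ae (Eventually.of_forall fun x => ?_)
          simp only [homeomorphUnitSphereProd_apply_fst_coe,
            homeomorphUnitSphereProd_apply_snd_coe]
          rw [smul_inv_smul₀ (norm_ne_zero_iff.2 x.2)]
      _ = ∫ q, F (q.2.1 • q.1.1) ∂(μ.toSphere.prod (Measure.volumeIoiPow (m - 1))) := key
      _ = ∫ q, W q ∂(μ.toSphere.prod (Measure.volumeIoiPow (m - 1))) := by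
          refine integral_congr_ae (Eventually.of_forall fun q => ?_)
          obtain ⟨⟨θ, hθ⟩, ⟨s, hs⟩⟩ := q
          have hθ1 : ‖θ‖ = 1 := mem_sphere_zero_iff_norm.1 hθ
          have hθ0 : θ ≠ 0 := by intro h; rw [h] at hθ1; simp at hθ1
          have hs0 : (0:ℝ) < s := hs
          have hnorm : ‖s • θ‖ = s := by
            rw [norm_smul, hθ1, Real.norm_eq_abs, abs_of_pos hs0, mul_one]
          have hne : s • θ ≠ 0 := smul_ne_zero hs0.ne' hθ0
          simp only [hF, hW, hnorm, dif_pos hne, smul_smul,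
            inv_mul_cancel₀ hs0.ne', one_smul]
  rw [h2]
  have hWmeas : Measurable W := by
    refine Measurable.ite (measurableSet_lt (by fun_prop) measurable_const) ?_ measurable_const
    fun_prop
  have hWint : Integrable W (μ.toSphere.prod (Measure.volumeIoiPow (m-1))) := by
    refine Integrable.mono'
      (g := (univ ×ˢ Iio (⟨r, hr⟩ : Ioi (0:ℝ))).indicator fun _ => ε^(1-p)) ?_
      hWmeas.aestronglyMeasurable ?_
    · rw [integrable_indicator_iff (MeasurableSet.univ.prod measurableSet_Iio)]
      refine integrableOn_const (LT.lt.ne ?_) (by simp)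
      rw [Measure.prod_prod]
      exact ENNReal.mul_lt_top (measure_lt_top _ _)
        (by rw [Measure.volumeIoiPow_apply_Iio]; exact ENNReal.ofReal_lt_top)
    · refine Eventually.of_forall fun q => ?_
      by_cases hq : q.2.1 < r
      · have hmem : q ∈ univ ×ˢ Iio (⟨r, hr⟩ : Ioi (0:ℝ)) :=
          ⟨mem_univ _, by rw [mem_Iio, ← Subtype.coe_lt_coe]; exact hq⟩
        rw [indicator_of_mem hmem, hW]
        simp only [if_pos hq]
        have hbase : ε ≤ ε + a q.1 * q.2.1 ^ (1+γ) := by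
          have h1 := (hapos q.1).le
          have h2 := Real.rpow_nonneg (le_of_lt q.2.2) (1+γ)
          nlinarith
        rw [Real.norm_eq_abs, abs_of_nonneg (Real.rpow_nonneg (by linarith) _)]
        exact Real.rpow_le_rpow_of_nonpos hε hbase (by linarith)
      · simp only [hW, if_neg hq, norm_zero]
        exact indicator_nonneg (fun _ _ => Real.rpow_nonneg hε.le _) _
  rw [integral_prod W hWint]
  refine integral_congr_ae (Eventually.of_forall fun θ => ?_)
  simp only []
  rw [Measure.volumeIoiPow]
  simp only [ENNReal.ofReal]
  rw [integral_withDensity_eq_integral_smul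
    ((measurable_subtype_coe.pow_const _).real_toNNReal) (fun s => W (θ, s))]
  rw [integral_subtype_comap measurableSet_Ioi
    (fun s : ℝ => (s ^ (m-1)).toNNReal • (if s < r then (ε + a θ * s^(1+γ))^(1-p) else 0))]
  refine setIntegral_congr_fun measurableSet_Ioi fun s hs => ?_
  rw [NNReal.smul_def, Real.coe_toNNReal _ (pow_nonneg (le_of_lt hs) _), smul_eq_mul]


lemma stepScale (k : ℕ) {r ε γ p α : ℝ} (hr : 0 < r) (hε : 0 < ε) (hγ : 0 < γ)
    (hα : 0 < α) :
    ∫ s in Ioi (0:ℝ), s ^ k * (if s < r then (ε + α * s^(1+γ))^(1-p) else 0)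
    = ε ^ (((k:ℝ)+1) * (1+γ)⁻¹) * ε^(1-p) *
      ∫ t in Ioi (0:ℝ), t ^ k *
        (if t < r * ε ^ (-(1+γ)⁻¹) then (1 + α * t^(1+γ))^(1-p) else 0) := by
  have h1γ : (0:ℝ) < 1 + γ := by linarith
  set c : ℝ := ε ^ ((1+γ)⁻¹) with hc_def
  have hc : 0 < c := Real.rpow_pos_of_pos hε _
  set g : ℝ → ℝ := fun s => s ^ k * (if s < r then (ε + α * s^(1+γ))^(1-p) else 0) with hg
  have key := integral_comp_mul_left_Ioi g 0 hc
  rw [mul_zero] at key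
  have h6 : ∫ s in Ioi (0:ℝ), g s = c * ∫ t in Ioi (0:ℝ), g (c*t) := by
    rw [key, smul_eq_mul, ← mul_assoc, mul_inv_cancel₀ hc.ne', one_mul]
  have h7 : ∫ t in Ioi (0:ℝ), g (c*t)
      = c ^ k * ε^(1-p) * ∫ t in Ioi (0:ℝ), t ^ k *
          (if t < r * ε ^ (-(1+γ)⁻¹) then (1 + α * t^(1+γ))^(1-p) else 0) := by
    rw [← integral_const_mul]
    refine setIntegral_congr_fun measurableSet_Ioi fun t ht => ?_
    have ht0 : (0:ℝ) < t := ht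
    have hcg : c ^ (1+γ) = ε := by
      rw [hc_def, ← Real.rpow_mul hε.le, inv_mul_cancel₀ h1γ.ne', Real.rpow_one]
    have hcond : (c * t < r) = (t < r * ε ^ (-(1+γ)⁻¹)) := by
      rw [Real.rpow_neg hε.le, ← hc_def, eq_iff_iff, mul_comm c t,
        ← lt_div_iff₀ hc, div_eq_mul_inv]
    have hval : (ε + α * (c*t)^(1+γ))^(1-p)
        = ε^(1-p) * (1 + α * t^(1+γ))^(1-p) := by
      rw [Real.mul_rpow hc.le ht0.le, hcg]
      have : ε + α * (ε * t^(1+γ)) = ε * (1 + α * t^(1+γ)) := by ring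
      rw [this, Real.mul_rpow hε.le]
      have := Real.rpow_nonneg ht0.le (1+γ)
      nlinarith
    simp only [hg, mul_pow, hcond, hval, mul_ite, mul_zero]
    ring_nf
  rw [h6, h7]
  have h8 : c * c ^ k = ε ^ (((k:ℝ)+1) * (1+γ)⁻¹) := by
    rw [← pow_succ' c k, hc_def, ← Real.rpow_natCast (ε ^ ((1+γ)⁻¹)) (k+1),
      ← Real.rpow_mul hε.le]
    push_cast
    ring_nf
  rw [← mul_assoc, ← mul_assoc, h8]


set_option maxHeartbeats 1000000 in
open Classical in
/-- Remark 4.4: when the coefficient depends only on the angular variable, the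
scaled integral converges to an explicit double integral over the unit sphere. -/
theorem tendsto_scaled_integral_angular_coeff
    {n : ℕ} (hn : 3 ≤ n) (γ p r a_min : ℝ) (hγ : γ ∈ Ioo (0:ℝ) 1)
    (hp : ((n:ℝ) + γ) / (1 + γ) < p) (hr : 0 < r) (hamin : 0 < a_min)
    (a : sphere (0 : EuclideanSpace ℝ (Fin (n-1))) 1 → ℝ)
    (ha_cont : Continuous a) (ha : ∀ θ, a_min ≤ a θ) :
    Tendsto (fun ε : ℝ =>
      ε ^ ((p - 1) - ((n:ℝ) - 1) / (1 + γ)) *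
        ∫ x' in {x' : EuclideanSpace ℝ (Fin (n-1)) | ‖x'‖ < r},
          if h : x' ≠ 0 then
            (ε + a ⟨‖x'‖⁻¹ • x',
                mem_sphere_zero_iff_norm.mpr (norm_smul_inv_norm h)⟩ *
              ‖x'‖ ^ (1 + γ)) ^ (1 - p)
          else 0)
      (nhdsWithin 0 (Ioi 0))
      (nhds (∫ θ, (∫ s in Ioi (0:ℝ),
          s ^ ((n:ℝ) - 2) / (1 + a θ * s ^ (1 + γ)) ^ (p - 1))
        ∂((volume : Measure (EuclideanSpace ℝ (Fin (n-1)))).toSphere))) := by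
  have hγ0 : 0 < γ := hγ.1
  have h1γ : (0:ℝ) < 1 + γ := by linarith
  set k : ℕ := n - 2 with hk
  have hkn : ((k:ℝ)) = (n:ℝ) - 2 := by
    rw [hk, Nat.cast_sub (by omega)]; norm_num
  have hm : 2 ≤ n - 1 := by omega
  have hnp : ((n:ℝ) + γ) < p * (1+γ) := (div_lt_iff₀ h1γ).1 hp
  have hn3 : (3:ℝ) ≤ (n:ℝ) := by exact_mod_cast hn
  have hkp : (k:ℝ) + 1 < (1+γ)*(p-1) := by rw [hkn]; nlinarith
  have hp1 : 1 < p := by nlinarith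
  have hapos : ∀ θ, 0 < a θ := fun θ => lt_of_lt_of_le hamin (ha θ)
  set σm := (volume : Measure (EuclideanSpace ℝ (Fin (n-1)))).toSphere with hσm
  set l := nhdsWithin (0:ℝ) (Ioi 0) with hl
  -- the limit function and the dominating constant
  set G : sphere (0 : EuclideanSpace ℝ (Fin (n-1))) 1 → ℝ := fun θ =>
    ∫ t in Ioi (0:ℝ), t ^ k * (1 + a θ * t ^ (1+γ)) ^ (1-p) with hG
  set C : ℝ := ∫ t in Ioi (0:ℝ), t ^ k * (1 + a_min * t ^ (1+γ)) ^ (1-p) with hC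
  have hCint : IntegrableOn (fun t : ℝ => t ^ k * (1 + a_min * t ^ (1+γ)) ^ (1-p))
      (Ioi (0:ℝ)) := aux_integrable k hγ0 hamin hkp
  -- the truncated integrals
  set Φ : sphere (0 : EuclideanSpace ℝ (Fin (n-1))) 1 → ℝ → ℝ := fun θ ε =>
    ∫ t in Ioi (0:ℝ), t ^ k *
      (if t < r * ε ^ (-(1+γ)⁻¹) then (1 + a θ * t ^ (1+γ)) ^ (1-p) else 0) with hΦ
  -- rewrite the target
  have htarget : ∫ θ, (∫ s in Ioi (0:ℝ),
      s ^ ((n:ℝ) - 2) / (1 + a θ * s ^ (1 + γ)) ^ (p - 1)) ∂σm = ∫ θ, G θ ∂σm := by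
    refine integral_congr_ae (Eventually.of_forall fun θ => ?_)
    refine setIntegral_congr_fun measurableSet_Ioi fun s hs => ?_
    have hs0 : (0:ℝ) < s := hs
    have hbase : 0 < 1 + a θ * s ^ (1+γ) := by
      have h2 := Real.rpow_nonneg hs0.le (1+γ)
      nlinarith [hapos θ]
    rw [← hkn, Real.rpow_natCast, div_eq_mul_inv, show (1:ℝ)-p = -(p-1) by ring,
      Real.rpow_neg hbase.le]
  rw [htarget]
  -- the key identity for positive ε
  have hstep : ∀ ε : ℝ, 0 < ε →
      ε ^ ((p - 1) - ((n:ℝ) - 1) / (1 + γ)) *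
        (∫ x' in {x' : EuclideanSpace ℝ (Fin (n-1)) | ‖x'‖ < r},
          if h : x' ≠ 0 then
            (ε + a ⟨‖x'‖⁻¹ • x',
                mem_sphere_zero_iff_norm.mpr (norm_smul_inv_norm h)⟩ *
              ‖x'‖ ^ (1 + γ)) ^ (1 - p)
          else 0) = ∫ θ, Φ θ ε ∂σm := by
    intro ε hε
    rw [stepA hm hr hε hγ0 hp1 a ha_cont hapos]
    have hmk : n - 1 - 1 = k := by omega
    rw [hmk]
    have hinner : ∀ θ, (∫ s in Ioi (0:ℝ),
        s ^ k * (if s < r then (ε + a θ * s ^ (1 + γ)) ^ (1 - p) else 0))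
        = ε ^ (((k:ℝ)+1) * (1+γ)⁻¹) * ε ^ (1-p) * Φ θ ε :=
      fun θ => stepScale k hr hε hγ0 (hapos θ)
    rw [integral_congr_ae (Eventually.of_forall fun θ => hinner θ)]
    rw [integral_const_mul (ε ^ (((k:ℝ)+1) * (1+γ)⁻¹) * ε ^ (1-p)) (fun θ => Φ θ ε)]
    rw [← mul_assoc, ← mul_assoc, ← Real.rpow_add hε, ← Real.rpow_add hε]
    have hexp : p - 1 - ((n:ℝ) - 1) / (1 + γ) + ((k:ℝ)+1) * (1+γ)⁻¹ + (1-p) = 0 := by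
      rw [hkn]; field_simp; ring
    rw [hexp, Real.rpow_zero, one_mul]
  -- dominated convergence
  have hmain : Tendsto (fun ε => ∫ θ, Φ θ ε ∂σm) l (nhds (∫ θ, G θ ∂σm)) := by
    refine tendsto_integral_filter_of_dominated_convergence (fun _ => C)
      (Eventually.of_forall fun ε => ?_) (Eventually.of_forall fun ε => ?_)
      (integrable_const C) (Eventually.of_forall fun θ => ?_)
    · -- measurability
      refine (StronglyMeasurable.integral_prod_right' (f := fun q :
          (sphere (0 : EuclideanSpace ℝ (Fin (n-1))) 1) × ℝ => q.2 ^ k *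
          (if q.2 < r * ε ^ (-(1+γ)⁻¹) then (1 + a q.1 * q.2 ^ (1+γ)) ^ (1-p) else 0))
        ?_).aestronglyMeasurable
      refine Measurable.stronglyMeasurable ?_
      refine Measurable.mul (by fun_prop) ?_
      refine Measurable.ite (measurableSet_lt (by fun_prop) measurable_const) ?_
        measurable_const
      fun_prop
    · -- uniform bound
      refine Eventually.of_forall fun θ => ?_
      have hnn : 0 ≤ Φ θ ε := by
        refine setIntegral_nonneg measurableSet_Ioi fun t ht => ?_
        have ht0 : (0:ℝ) < t := ht
        have : (0:ℝ) ≤ (if t < r * ε ^ (-(1+γ)⁻¹)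
            then (1 + a θ * t ^ (1+γ)) ^ (1-p) else 0) := by
          split
          · exact Real.rpow_nonneg (by
              have := Real.rpow_nonneg ht0.le (1+γ); nlinarith [hapos θ]) _
          · exact le_rfl
        exact mul_nonneg (by positivity) this
      rw [Real.norm_eq_abs, abs_of_nonneg hnn]
      refine integral_mono_of_nonneg ?_ hCint ?_
      · filter_upwards [ae_restrict_mem measurableSet_Ioi] with t ht
        have ht0 : (0:ℝ) < t := ht
        have h2 := Real.rpow_nonneg ht0.le (1+γ)
        split
        · have : (0:ℝ) ≤ (1 + a θ * t ^ (1+γ)) ^ (1-p) :=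
            Real.rpow_nonneg (by nlinarith [hapos θ]) _
          positivity
        · simp
      · filter_upwards [ae_restrict_mem measurableSet_Ioi] with t ht
        have ht0 : (0:ℝ) < t := ht
        have h2 := Real.rpow_nonneg ht0.le (1+γ)
        have hminpos : 0 < 1 + a_min * t ^ (1+γ) := by nlinarith
        have hle : 1 + a_min * t ^ (1+γ) ≤ 1 + a θ * t ^ (1+γ) := by
          nlinarith [ha θ]
        have hkey : (1 + a θ * t ^ (1+γ)) ^ (1-p) ≤ (1 + a_min * t ^ (1+γ)) ^ (1-p) :=
          Real.rpow_le_rpow_of_nonpos hminpos hle (by linarith)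
        split
        · exact mul_le_mul_of_nonneg_left hkey (by positivity)
        · have : (0:ℝ) ≤ (1 + a_min * t ^ (1+γ)) ^ (1-p) :=
            Real.rpow_nonneg hminpos.le _
          rw [mul_zero]
          exact mul_nonneg (pow_nonneg ht0.le k) this
    · -- pointwise limit
      have hint := aux_integrable k hγ0 (hapos θ) hkp
      have hR := tendR hγ0 hr
      have h := intervalIntegral_tendsto_integral_Ioi 0 hint hR
      refine h.congr' ?_
      filter_upwards [eventually_mem_nhdsWithin] with ε (hε : (0:ℝ) < ε)
      have hRpos : 0 < r * ε ^ (-(1+γ)⁻¹) := by positivity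
      rw [intervalIntegral.integral_of_le hRpos.le, integral_Ioc_eq_integral_Ioo]
      exact (trunc_eq k (fun t => (1 + a θ * t ^ (1+γ)) ^ (1-p))
        (r * ε ^ (-(1+γ)⁻¹))).symm
  refine hmain.congr' ?_
  filter_upwards [eventually_mem_nhdsWithin] with ε (hε : (0:ℝ) < ε)
  exact (hstep ε hε).symm
end
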